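/- arXiv:0911.3923 — 4 statements merged into one kernel-verified Lean document; each statement's English description precedes it below -/
import Mathlib

section
/- Let V be a nonempty type, let G be a simple graph on V, and let a group Γ act on V preserving adjacency (for all γ ∈ Γ and all vertices u, v, if u and v are adjacent in G then γ·u and γ·v are adjacent in G). Suppose that a subset S of Γ generates Γ, that the action of Γ on V is transitive, and that there exists a vertex v₀ such that for every s ∈ S either s·v₀ = v₀ or s·v₀ is adjacent to v₀ in G. Then G is connected. -/
/-- Putman's connectivity criterion: if a group `Γ` acts on the vertices of a simple
graph `G` preserving adjacency, the action is transitive, `S` generates `Γ`, and there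
is a base vertex `v₀` such that every `s ∈ S` either fixes `v₀` or moves it to an
adjacent vertex, then `G` is connected. -/
theorem putman_connectivity {V : Type*} [Nonempty V] (G : SimpleGraph V)
    {Γ : Type*} [Group Γ] [MulAction Γ V]
    (hadj : ∀ (γ : Γ) (u v : V), G.Adj u v → G.Adj (γ • u) (γ • v))
    (S : Set Γ) (hgen : Subgroup.closure S = ⊤)
    (htrans : ∀ u v : V, ∃ γ : Γ, γ • u = v)
    (v₀ : V) (hv₀ : ∀ s ∈ S, s • v₀ = v₀ ∨ G.Adj (s • v₀) v₀) :
    G.Connected := by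
  have hmap : ∀ (γ : Γ) (u v : V), G.Reachable u v → G.Reachable (γ • u) (γ • v) := by
    intro γ u v h
    exact h.map ⟨fun x => γ • x, fun hab => hadj γ _ _ hab⟩
  have key : ∀ γ : Γ, G.Reachable (γ • v₀) v₀ := by
    intro γ
    have hγ : γ ∈ Subgroup.closure S := hgen ▸ Subgroup.mem_top γ
    induction hγ using Subgroup.closure_induction with
    | mem s hs =>
      rcases hv₀ s hs with h | h
      · rw [h]
      · exact h.reachable
    | one => rw [one_smul]
    | mul a b _ _ ha hb =>
      have := (hmap a _ _ hb).trans ha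
      rwa [smul_smul] at this
    | inv a _ ha =>
      have := hmap a⁻¹ _ _ ha.symm
      rwa [inv_smul_smul] at this
  refine ⟨fun u v => ?_⟩
  obtain ⟨γ, hγ⟩ := htrans v₀ u
  obtain ⟨δ, hδ⟩ := htrans v₀ v
  exact (hγ ▸ key γ).trans (hδ ▸ key δ).symm
end

section
/- Let G be a simple graph on a vertex type V and let n be a natural number. Assume: (i) every vertex of G is contained in some triangle of G; (ii) for every pair of adjacent vertices a, b of G, the set of triangles of G containing both a and b is finite with exactly n elements; (iii) any two triangles of G are chain-connected in G. Then every injective graph homomorphism from G to itself is surjective. -/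
/-- Two triangles `s, t` of a simple graph `G` are chain-connected in `G` if there is
a finite sequence of triangles from `s` to `t` in which consecutive triangles meet
along an edge of `G`. -/
def ChainConnected {V : Type*} [DecidableEq V] (G : SimpleGraph V)
    (s t : Finset V) : Prop :=
  ∃ (m : ℕ) (c : Fin (m + 1) → Finset V),
    c 0 = s ∧ c (Fin.last m) = t ∧ (∀ i, G.IsNClique 3 (c i)) ∧
    ∀ i : Fin m, ∃ x y : V, G.Adj x y ∧ c i.castSucc ∩ c i.succ = {x, y}

/-- If every vertex of `G` lies in a triangle, every edge of `G` lies in exactly `n`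
triangles, and any two triangles of `G` are chain-connected, then every injective
graph homomorphism from `G` to itself is surjective. -/
theorem injective_hom_surjective_of_triangles {V : Type*} [DecidableEq V]
    (G : SimpleGraph V) (n : ℕ)
    (h₁ : ∀ v : V, ∃ t : Finset V, G.IsNClique 3 t ∧ v ∈ t)
    (h₂ : ∀ a b : V, G.Adj a b →
      {t : Finset V | G.IsNClique 3 t ∧ a ∈ t ∧ b ∈ t}.Finite ∧
      {t : Finset V | G.IsNClique 3 t ∧ a ∈ t ∧ b ∈ t}.ncard = n)
    (h₃ : ∀ s t : Finset V, G.IsNClique 3 s → G.IsNClique 3 t →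
      ChainConnected G s t)
    (f : V → V) (hhom : ∀ a b : V, G.Adj a b → G.Adj (f a) (f b))
    (hinj : Function.Injective f) :
    Function.Surjective f := by
  have himg : ∀ s : Finset V, G.IsNClique 3 s → G.IsNClique 3 (s.image f) := by
    intro s hs
    constructor
    · rintro x hx y hy hxy
      simp only [Finset.coe_image, Set.mem_image, Finset.mem_coe] at hx hy
      obtain ⟨a, ha, rfl⟩ := hx
      obtain ⟨b, hb, rfl⟩ := hy
      exact hhom a b (hs.1 (Finset.mem_coe.mpr ha) (Finset.mem_coe.mpr hb)
        (fun h => hxy (by rw [h])))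
    · rw [Finset.card_image_of_injective _ hinj, hs.2]
  have hkey : ∀ a b : V, G.Adj a b → ∀ t' : Finset V, G.IsNClique 3 t' →
      f a ∈ t' → f b ∈ t' → ∃ s : Finset V, G.IsNClique 3 s ∧ s.image f = t' := by
    intro a b hab t' ht' hfa hfb
    set S := {u : Finset V | G.IsNClique 3 u ∧ a ∈ u ∧ b ∈ u} with hSdef
    set T := {u : Finset V | G.IsNClique 3 u ∧ f a ∈ u ∧ f b ∈ u} with hTdef
    have hS := h₂ a b hab
    have hT := h₂ (f a) (f b) (hhom a b hab)
    have hsub : (Finset.image f) '' S ⊆ T := by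
      rintro _ ⟨u, ⟨hu, hau, hbu⟩, rfl⟩
      exact ⟨himg u hu, Finset.mem_image_of_mem f hau, Finset.mem_image_of_mem f hbu⟩
    have hcard : T.ncard ≤ ((Finset.image f) '' S).ncard := by
      rw [Set.ncard_image_of_injective S (Finset.image_injective hinj), hS.2, hT.2]
    have heq := Set.eq_of_subset_of_ncard_le hsub hcard hT.1
    have ht'mem : t' ∈ (Finset.image f) '' S := by
      rw [heq]; exact ⟨ht', hfa, hfb⟩
    obtain ⟨s, hsS, hs⟩ := ht'mem
    exact ⟨s, hsS.1, hs⟩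
  intro v
  obtain ⟨t, ht, hvt⟩ := h₁ v
  obtain ⟨m, c, hc0, hclast, hcl, hstep⟩ := h₃ (t.image f) t (himg t ht) ht
  have hall : ∀ i : Fin (m + 1), ∃ s, G.IsNClique 3 s ∧ s.image f = c i := by
    intro i
    induction i using Fin.induction with
    | zero => exact ⟨t, ht, hc0.symm⟩
    | succ i ih =>
      obtain ⟨s, hs, hsi⟩ := ih
      obtain ⟨x, y, hxy, hint⟩ := hstep i
      have hx : x ∈ c i.castSucc ∩ c i.succ := by rw [hint]; simp
      have hy : y ∈ c i.castSucc ∩ c i.succ := by rw [hint]; simp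
      have hxs : x ∈ s.image f := by rw [hsi]; exact (Finset.mem_inter.mp hx).1
      have hys : y ∈ s.image f := by rw [hsi]; exact (Finset.mem_inter.mp hy).1
      obtain ⟨a, ha, rfl⟩ := Finset.mem_image.mp hxs
      obtain ⟨b, hb, rfl⟩ := Finset.mem_image.mp hys
      have hab : G.Adj a b := hs.1 (Finset.mem_coe.mpr ha) (Finset.mem_coe.mpr hb)
        (fun h => hxy.ne (by rw [h]))
      exact hkey a b hab (c i.succ) (hcl i.succ) (Finset.mem_inter.mp hx).2
        (Finset.mem_inter.mp hy).2
  obtain ⟨s, _, hst⟩ := hall (Fin.last m)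
  rw [hclast] at hst
  rw [← hst] at hvt
  obtain ⟨a, _, ha⟩ := Finset.mem_image.mp hvt
  exact ⟨a, ha⟩
end

section
/- Let G and H be simple graphs and let π be a graph homomorphism from G to H that is surjective on vertices. Assume that H is connected and has at least two vertices, and that for every pair of adjacent vertices b, c of H, the subgraph of G induced on π⁻¹({b, c}) (all vertices of G mapping to b or to c) is connected. Then G is connected. -/
/-- If `π` is a vertex-surjective graph homomorphism from `G` to a connected graph
`H` with at least two vertices, and the subgraph of `G` induced on the preimage of
each edge of `H` is connected, then `G` is connected. -/
theorem connected_of_fiber_connected {V W : Type*} (G : SimpleGraph V)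
    (H : SimpleGraph W) (π : V → W)
    (hhom : ∀ a b : V, G.Adj a b → H.Adj (π a) (π b))
    (hsurj : Function.Surjective π)
    (hH : H.Connected) (hW : ∃ w₁ w₂ : W, w₁ ≠ w₂)
    (hfib : ∀ b c : W, H.Adj b c →
      (SimpleGraph.induce {v : V | π v = b ∨ π v = c} G).Connected) :
    G.Connected := by
  -- fiber reachability lemma
  have fibreach : ∀ b c : W, H.Adj b c → ∀ u v : V,
      (π u = b ∨ π u = c) → (π v = b ∨ π v = c) → G.Reachable u v := by
    intro b c hbc u v hu hv
    have hconn := (hfib b c hbc).preconnected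
    have hr := hconn ⟨u, hu⟩ ⟨v, hv⟩
    have := hr.map (SimpleGraph.Embedding.induce
      ({v : V | π v = b ∨ π v = c} : Set V)).toHom
    simpa using this
  -- exists a neighbor of any vertex in H
  have nbr : ∀ x : W, ∃ c, H.Adj x c := by
    intro x
    obtain ⟨w₁, w₂, hne⟩ := hW
    have hxw : ∃ w, w ≠ x := by
      by_cases h : w₁ = x
      · exact ⟨w₂, by rintro rfl; exact hne h⟩
      · exact ⟨w₁, h⟩
    obtain ⟨w, hw⟩ := hxw
    obtain ⟨p⟩ := hH x w
    cases p with
    | nil => exact absurd rfl hw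
    | cons h q => exact ⟨_, h⟩
  -- main: induct over walks in H
  have key : ∀ {x y : W} (p : H.Walk x y) (u v : V),
      π u = x → π v = y → G.Reachable u v := by
    intro x y p
    induction p with
    | nil =>
      intro u v hu hv
      obtain ⟨c, hc⟩ := nbr (π u)
      exact fibreach _ c hc u v (Or.inl rfl) (Or.inl (hv.trans hu.symm))
    | @cons a b d hab p ih =>
      intro u v hu hv
      obtain ⟨u', hu'⟩ := hsurj b
      exact (fibreach a b hab u u' (Or.inl hu) (Or.inr hu')).trans (ih u' v hu' hv)
  rw [SimpleGraph.connected_iff]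
  constructor
  · intro u v
    obtain ⟨p⟩ := hH (π u) (π v)
    exact key p u v rfl rfl
  · obtain ⟨w₁, _, _⟩ := hW
    obtain ⟨v, _⟩ := hsurj w₁
    exact ⟨v⟩
end

section
/- The Farey graph F is connected. -/
/-- A coprime pair of integers, representing a vertex of the Farey graph. -/
def FareyPair : Type := {p : ℤ × ℤ // IsCoprime p.1 p.2}

/-- The equivalence identifying a coprime pair with its negation. -/
def fareySetoid : Setoid FareyPair where
  r x y := x.val = y.val ∨ x.val = -y.val
  iseqv := by
    refine ⟨fun x => Or.inl rfl, ?_, ?_⟩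
    · rintro x y (h | h)
      · exact Or.inl h.symm
      · exact Or.inr (by rw [h, neg_neg])
    · rintro x y z (h1 | h1) (h2 | h2)
      · exact Or.inl (h1.trans h2)
      · exact Or.inr (by rw [h1, h2])
      · exact Or.inr (by rw [h1, h2])
      · exact Or.inl (by rw [h1, h2, neg_neg])

/-- A vertex of the Farey graph: a coprime pair of integers up to simultaneous
negation. -/
def FareyVertex : Type := Quotient fareySetoid

/-- The vertex `[p:q]` of the Farey graph. -/
def fareyMk (p q : ℤ) (h : IsCoprime p q) : FareyVertex :=
  Quotient.mk fareySetoid ⟨(p, q), h⟩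

/-- The determinant `p * s - q * r` of two pairs `(p, q)` and `(r, s)`. -/
def fareyDet (x y : FareyPair) : ℤ := x.val.1 * y.val.2 - x.val.2 * y.val.1

private lemma farey_abs_helper (a b : ℤ) (h : a = b ∨ a = -b) :
    (|a| = 1) = (|b| = 1) := by
  rcases h with h | h <;> (rw [h]; try simp)

/-- The Farey graph: vertices `[p:q]` and `[r:s]` are adjacent iff `|ps - qr| = 1`. -/
def FareyGraph : SimpleGraph FareyVertex where
  Adj := Quotient.lift₂ (fun x y => |fareyDet x y| = 1) (by
    rintro x y x' y' (h1 | h1) (h2 | h2) <;> apply farey_abs_helper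
    · exact Or.inl (by simp only [fareyDet, h1, h2])
    · refine Or.inr ?_
      simp only [fareyDet, h1, h2, Prod.fst_neg, Prod.snd_neg]
      ring
    · refine Or.inr ?_
      simp only [fareyDet, h1, h2, Prod.fst_neg, Prod.snd_neg]
      ring
    · refine Or.inl ?_
      simp only [fareyDet, h1, h2, Prod.fst_neg, Prod.snd_neg]
      ring)
  symm := by
    refine ⟨fun u v => ?_⟩
    refine Quotient.inductionOn₂ u v ?_
    intro x y h
    change |fareyDet x y| = 1 at h
    change |fareyDet y x| = 1
    rw [show fareyDet y x = -fareyDet x y from by simp only [fareyDet]; ring,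
      abs_neg]
    exact h
  loopless := by
    refine ⟨fun u => ?_⟩
    refine Quotient.inductionOn u ?_
    intro x h
    change |fareyDet x x| = 1 at h
    rw [show fareyDet x x = 0 from by simp only [fareyDet]; ring] at h
    simp at h

noncomputable instance : DecidableEq FareyVertex := Classical.decEq _



private lemma farey_reach (n : ℕ) : ∀ x : FareyPair, x.val.2.natAbs ≤ n →
    FareyGraph.Reachable (Quotient.mk fareySetoid x) (fareyMk 1 0 isCoprime_one_left) := by
  induction n using Nat.strong_induction_on with
  | _ n ih =>
    intro x hx
    obtain ⟨⟨p, q⟩, hpq⟩ := x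
    by_cases hq : q = 0
    · subst hq
      have hp : IsUnit p := isCoprime_zero_right.mp hpq
      rcases Int.isUnit_iff.mp hp with rfl | rfl
      · rw [show Quotient.mk fareySetoid ⟨((1:ℤ), (0:ℤ)), hpq⟩ = fareyMk 1 0 isCoprime_one_left
            from Quotient.sound (Or.inl rfl)]
      · rw [show Quotient.mk fareySetoid ⟨((-1:ℤ), (0:ℤ)), hpq⟩ = fareyMk 1 0 isCoprime_one_left
            from Quotient.sound (Or.inr (by norm_num [Prod.ext_iff]))]
    · -- Bézout: a*p + b*q = 1
      obtain ⟨a, b, hab⟩ := hpq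
      have hab' : a * p + b * q = 1 := hab
      have habs : (0:ℤ) < |q| := abs_pos.mpr hq
      have hqd : q ∣ (a % |q| - a) := by
        have : |q| ∣ (a % |q| - a) := ⟨-(a / |q|), by rw [Int.emod_def]; ring⟩
        exact (abs_dvd q _).mp this
      obtain ⟨k, hk⟩ := hqd
      set t : ℤ := a % |q| with ht
      have htq : t = a + q * k := by linarith [hk]
      set r : ℤ := -b + k * p with hr
      have hdet : p * t - q * r = 1 := by rw [htq, hr]; linear_combination hab'
      have hcop : IsCoprime r t := ⟨-q, p, by linarith [hdet]⟩
      have ht0 : 0 ≤ t := Int.emod_nonneg a (ne_of_gt habs)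
      have htlt : t < |q| := Int.emod_lt_of_pos a habs
      have htn : t.natAbs < q.natAbs := by
        rw [Int.abs_eq_natAbs] at htlt
        omega
      have hadj : FareyGraph.Adj (Quotient.mk fareySetoid ⟨(p, q), ⟨a, b, hab⟩⟩)
          (Quotient.mk fareySetoid ⟨(r, t), hcop⟩) := by
        change |fareyDet ⟨(p, q), _⟩ ⟨(r, t), _⟩| = 1
        simp only [fareyDet]
        rw [hdet]; norm_num
      exact hadj.reachable.trans
        (ih t.natAbs (lt_of_lt_of_le htn hx) ⟨(r, t), hcop⟩ le_rfl)

/-- The Farey graph is connected. -/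
theorem fareyGraph_connected : FareyGraph.Connected := by
  rw [SimpleGraph.connected_iff]
  refine ⟨fun u v => ?_, ⟨fareyMk 1 0 isCoprime_one_left⟩⟩
  refine Quotient.inductionOn₂ u v fun x y => ?_
  exact (farey_reach _ x le_rfl).trans (farey_reach _ y le_rfl).symm
end
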